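/- The map F of the previous statement is compatible with Poisson brackets: with the degree −2 bracket on C•(𝔤,k) determined by {eⁱ, eʲ} = P^{ij}, {eⁱ, ẽʲ} = Q^{ij}, {ẽⁱ, ẽʲ} = 0, and the bracket on C•(𝔥, Sym(𝔥[-1])) given by the canonical pairing ⟨eⁱ, e_j⟩ = δⁱ_j extended as a biderivation, one has F({x,y}) = {F(x), F(y)} for all x, y. -/
import Mathlib


/-!
STATEMENT 14: The map `F : C•(𝔤,k) → C•(𝔥, Sym(𝔥[-1]))` of Statement 13, defined on
generators by `F(eⁱ) = eⁱ + (1/2)P^{ij} e_j`, `F(ẽⁱ) = Q^{ji} e_j` and extended as a map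
of graded commutative algebras, is compatible with the Poisson brackets: the source
carries the degree `−2` bracket `{eⁱ,eʲ} = P^{ij}`, `{eⁱ,ẽʲ} = Q^{ij}`, `{ẽⁱ,ẽʲ} = 0`,
the target carries the canonical pairing `⟨eⁱ, e_j⟩ = δⁱ_j`, both extended as graded
biderivations, and `F({x,y}) = {F(x), F(y)}` for all `x, y`.

Since `F` is an algebra map and both brackets are biderivations vanishing on scalars,
compatibility holds for all elements iff it holds on generators.  We index the source
generators `eⁱ, ẽⁱ` and the target generators `eⁱ, e_i` by `ι ⊕ ι`, encode the brackets
by their coefficient matrices `Sbr`, `Tbr` and `F` by its coefficient matrix `Fc`; the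
statement is then that the bracket matrices correspond under `F`.
-/

open Finset

variable {k ι : Type*} [Field k] [CharZero k] [Fintype ι] [DecidableEq ι]

/-- Source bracket on generators: `{eⁱ,eʲ} = P^{ij}`, `{eⁱ,ẽʲ} = Q^{ij}`, `{ẽⁱ,ẽʲ} = 0`
(`Sum.inl i ↔ eⁱ`, `Sum.inr i ↔ ẽⁱ`). -/
def sourceBr (P Q : ι → ι → k) : ι ⊕ ι → ι ⊕ ι → k
  | Sum.inl i, Sum.inl j => P i j
  | Sum.inl i, Sum.inr j => Q i j
  | Sum.inr i, Sum.inl j => Q j i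
  | Sum.inr _, Sum.inr _ => 0

/-- Target bracket on generators: the canonical pairing `{eⁱ, e_j} = δⁱ_j`
(`Sum.inl i ↔ eⁱ ∈ 𝔥*`, `Sum.inr i ↔ e_i ∈ 𝔥`). -/
def targetBr : ι ⊕ ι → ι ⊕ ι → k
  | Sum.inl i, Sum.inr j => if i = j then 1 else 0
  | Sum.inr i, Sum.inl j => if i = j then 1 else 0
  | _, _ => 0

/-- The coefficient matrix of `F` on generators: `F(eⁱ) = eⁱ + (1/2)P^{ij} e_j`,
`F(ẽⁱ) = Q^{ji} e_j`. -/
def Fcoeff (P Q : ι → ι → k) : ι ⊕ ι → ι ⊕ ι → k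
  | Sum.inl i, Sum.inl j => if i = j then 1 else 0
  | Sum.inl i, Sum.inr j => (1/2 : k) * P i j
  | Sum.inr _, Sum.inl _ => 0
  | Sum.inr i, Sum.inr j => Q j i

/-- The algebra map `F` is compatible with the Poisson brackets:
`F({x,y}) = {F(x),F(y)}`, equivalently (on generators, since both sides are extended as
graded biderivations over the algebra map `F`):
`Sbr(s,t) = ∑_{u,v} Fc(s,u) Fc(t,v) Tbr(u,v)` for all generators `s, t`. -/
theorem F_bracket_compatible (P Q : ι → ι → k) (hP : ∀ i j, P i j = P j i) :
    ∀ s t : ι ⊕ ι, sourceBr P Q s t =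
      ∑ u : ι ⊕ ι, ∑ v : ι ⊕ ι, Fcoeff P Q s u * Fcoeff P Q t v * targetBr u v := by
  rintro (i|i) (j|j) <;>
    simp [sourceBr, targetBr, Fcoeff, Fintype.sum_sum_type, mul_ite, ite_mul,
      Finset.mul_sum, Finset.sum_ite_eq, Finset.sum_ite_eq'] <;>
    rw [hP i j] <;> ring
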